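/- Let p be an odd prime and let v ∈ ℤ^p be a circular vector. Then every entry of the vector A_p^{p−1} v is divisible by p, and moreover A_p^{p−1} v is again a circular vector. -/

import Mathlib

/-- A vector `v ∈ ℤ^p` (indexed by `Fin p`) is *circular* if there is an index `i`
with `v i = 0` and `v (i + j) = - v (i - j)` for all `j` with `1 ≤ j ≤ (p-1)/2`,
indices taken modulo `p`. -/
def Circular {p : ℕ} (v : Fin p → ℤ) : Prop :=
  ∃ i : Fin p, v i = 0 ∧
    ∀ j : Fin p, 1 ≤ (j : ℕ) → (j : ℕ) ≤ (p - 1) / 2 → v (i + j) = -v (i - j)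

open Fin.NatCast Fin.CommRing

private lemma stmt2_step {p : ℕ} [NeZero p] (hp1 : 1 < p)
    (A : Matrix (Fin p) (Fin p) ℤ)
    (hA : ∀ i j : Fin p, A i j = if j = i then -1 else if j = i + 1 then 1 else 0)
    (w : Fin p → ℤ) (i : Fin p) :
    A.mulVec w i = w (i + 1) - w i := by
  have hone : (1 : Fin p) ≠ 0 := by
    intro h
    have : (1 : Fin p).val = 0 := by rw [h]; rfl
    rw [Fin.val_one', Nat.mod_eq_of_lt hp1] at this
    exact one_ne_zero this
  have hne : i + 1 ≠ i := by
    intro h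
    apply hone
    have := congrArg (fun x => x - i) h
    simpa [add_sub_cancel_left] using this
  have h1 : A.mulVec w i
      = ∑ j, (if j = i then (-1 : ℤ) else if j = i + 1 then 1 else 0) * w j := by
    simp [Matrix.mulVec, dotProduct, hA]
  rw [h1]
  have h2 : ∀ j : Fin p,
      (if j = i then (-1 : ℤ) else if j = i + 1 then 1 else 0) * w j
        = (if j = i + 1 then w j else 0) + (if j = i then -w j else 0) := by
    intro j
    by_cases h1 : j = i
    · subst h1
      rw [if_pos rfl, if_neg (fun hh => hne hh.symm), if_pos rfl]
      ring
    · rw [if_neg h1, if_neg h1]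
      by_cases h2 : j = i + 1
      · rw [if_pos h2, if_pos h2]
        ring
      · rw [if_neg h2, if_neg h2]
        ring
  simp_rw [h2]
  rw [Finset.sum_add_distrib, Finset.sum_ite_eq', Finset.sum_ite_eq']
  simp [sub_eq_add_neg]

private lemma stmt2_coeff_rec (n k : ℕ) (hk : k ≤ n) :
    (-1 : ℤ) ^ (n + 1 - (k + 1)) * ((n + 1).choose (k + 1))
      = (-1 : ℤ) ^ (n - k) * (n.choose k)
        - (-1 : ℤ) ^ (n - (k + 1)) * (n.choose (k + 1)) := by
  rcases eq_or_lt_of_le hk with rfl | hk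
  · simp [Nat.choose_succ_succ, Nat.choose_succ_self]
  · have h1 : n + 1 - (k + 1) = n - k := by omega
    have h2 : n - k = (n - (k + 1)) + 1 := by omega
    rw [h1, Nat.choose_succ_succ, h2]
    push_cast
    ring

private lemma stmt2_conv {p : ℕ} [NeZero p] (hp1 : 1 < p)
    (A : Matrix (Fin p) (Fin p) ℤ)
    (hA : ∀ i j : Fin p, A i j = if j = i then -1 else if j = i + 1 then 1 else 0)
    (v : Fin p → ℤ) (n : ℕ) :
    ∀ i : Fin p, (A ^ n).mulVec v i
      = ∑ k ∈ Finset.range (n + 1),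
          ((-1 : ℤ) ^ (n - k) * (n.choose k)) * v (i + (k : Fin p)) := by
  induction n with
  | zero => intro i; simp [Matrix.one_mulVec]
  | succ n ih =>
    intro i
    have h1 : (A ^ (n + 1)).mulVec v i = A.mulVec ((A ^ n).mulVec v) i := by
      rw [pow_succ', Matrix.mulVec_mulVec]
    rw [h1, stmt2_step hp1 A hA, ih, ih]
    have hcast : ∀ k : ℕ, ((k + 1 : ℕ) : Fin p) = (k : Fin p) + 1 := by
      intro k; push_cast; ring
    -- rewrite shifted arguments
    have hshift : ∀ k : ℕ, (i + 1) + (k : Fin p) = i + ((k + 1 : ℕ) : Fin p) := by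
      intro k; rw [hcast]; ring
    -- LHS
    rw [Finset.sum_range_succ' (fun k =>
      ((-1 : ℤ) ^ (n + 1 - k) * ((n + 1).choose k)) * v (i + (k : Fin p))) (n + 1)]
    -- RHS second sum
    rw [Finset.sum_range_succ' (fun k =>
      ((-1 : ℤ) ^ (n - k) * (n.choose k)) * v (i + (k : Fin p))) n]
    have hzero : ((-1 : ℤ) ^ (n - (n + 1)) * (n.choose (n + 1)))
        * v (i + ((n + 1 : ℕ) : Fin p)) = 0 := by
      simp [Nat.choose_succ_self]
    have hext : ∑ k ∈ Finset.range n,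
        ((-1 : ℤ) ^ (n - (k + 1)) * (n.choose (k + 1))) * v (i + ((k + 1 : ℕ) : Fin p))
        = ∑ k ∈ Finset.range (n + 1),
        ((-1 : ℤ) ^ (n - (k + 1)) * (n.choose (k + 1))) * v (i + ((k + 1 : ℕ) : Fin p)) := by
      rw [Finset.sum_range_succ, hzero, add_zero]
    rw [hext]
    simp_rw [hshift]
    have hterm : ∀ k ∈ Finset.range (n + 1),
        ((-1 : ℤ) ^ (n + 1 - (k + 1)) * ((n + 1).choose (k + 1)))
          * v (i + ((k + 1 : ℕ) : Fin p))
        = ((-1 : ℤ) ^ (n - k) * (n.choose k)) * v (i + ((k + 1 : ℕ) : Fin p))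
          - ((-1 : ℤ) ^ (n - (k + 1)) * (n.choose (k + 1))) * v (i + ((k + 1 : ℕ) : Fin p)) := by
      intro k hk
      rw [← sub_mul, ← stmt2_coeff_rec n k (by simpa using Nat.lt_succ_iff.mp (Finset.mem_range.mp hk))]
    rw [Finset.sum_congr rfl hterm, Finset.sum_sub_distrib]
    simp only [Nat.sub_zero, Nat.choose_zero_right, Nat.cast_one, pow_succ]
    ring

private lemma stmt2_choose_mod (p : ℕ) (hp : p.Prime) :
    ∀ k, k ≤ p - 1 → (((p - 1).choose k : ℕ) : ZMod p) = (-1) ^ k := by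
  intro k
  induction k with
  | zero => intro _; simp
  | succ k ih =>
    intro hk
    have hk' : k ≤ p - 1 := by omega
    have hp2 : 2 ≤ p := hp.two_le
    have hpas : p.choose (k + 1) = (p - 1).choose k + (p - 1).choose (k + 1) := by
      have h : p = (p - 1) + 1 := by omega
      rw [h]
      exact Nat.choose_succ_succ _ _
    have hdvd : p ∣ p.choose (k + 1) :=
      hp.dvd_choose_self (by omega) (by omega)
    have hz : ((p.choose (k + 1) : ℕ) : ZMod p) = 0 := by
      exact_mod_cast (ZMod.natCast_eq_zero_iff _ _).mpr hdvd
    rw [hpas] at hz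
    push_cast at hz
    have := ih hk'
    rw [this] at hz
    have hb : (((p - 1).choose (k + 1) : ℕ) : ZMod p) = -(-1) ^ k :=
      eq_neg_of_add_eq_zero_right hz
    rw [hb, pow_succ]
    ring

theorem stmt2 (p : ℕ) (hp : p.Prime) (hodd : Odd p) [NeZero p]
    (A : Matrix (Fin p) (Fin p) ℤ)
    (hA : ∀ i j : Fin p, A i j = if j = i then -1 else if j = i + 1 then 1 else 0)
    (v : Fin p → ℤ) (hv : Circular v) :
    (∀ i : Fin p, (p : ℤ) ∣ ((A ^ (p - 1)).mulVec v) i) ∧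
      Circular ((A ^ (p - 1)).mulVec v) := by
  obtain ⟨m, hm⟩ := hodd
  have hp1 : 1 < p := hp.one_lt
  obtain ⟨i0, h0, hcirc⟩ := hv
  -- full antisymmetry of v around i0
  have hfull : ∀ t : Fin p, v (i0 + t) = -v (i0 - t) := by
    intro t
    by_cases ht : t = 0
    · subst ht
      simp [h0]
    · have htv : 1 ≤ t.val := Nat.pos_of_ne_zero (fun h => ht (Fin.ext h))
      have hlt := t.isLt
      by_cases hle : t.val ≤ (p - 1) / 2
      · exact hcirc t htv hle
      · have hnegval : (-t).val = p - t.val := by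
          rw [Fin.coe_neg]
          exact Nat.mod_eq_of_lt (by omega)
        have h1 : 1 ≤ (-t).val := by rw [hnegval]; omega
        have h2 : (-t).val ≤ (p - 1) / 2 := by rw [hnegval]; omega
        have h3 := hcirc (-t) h1 h2
        rw [sub_neg_eq_add, ← sub_eq_add_neg] at h3
        rw [h3]; ring
  have hpp : p - 1 + 1 = p := by omega
  have key : ∀ x : Fin p, (A ^ (p - 1)).mulVec v x
      = ∑ k ∈ Finset.range p,
          ((-1 : ℤ) ^ (p - 1 - k) * ((p - 1).choose k)) * v (x + (k : Fin p)) := by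
    intro x
    rw [stmt2_conv hp1 A hA v (p - 1) x, hpp]
  -- doubling
  have h2z : ∀ a : Fin p, a + a = 0 → a = 0 := by
    intro a ha
    have hval : (a.val + a.val) % p = 0 := by
      have := congrArg Fin.val ha
      simpa [Fin.val_add] using this
    have hlt := a.isLt
    rcases Nat.lt_or_ge (a.val + a.val) p with h | h
    · rw [Nat.mod_eq_of_lt h] at hval
      apply Fin.ext
      simp only [Fin.val_zero]
      omega
    · rw [Nat.mod_eq_sub_mod h, Nat.mod_eq_of_lt (by omega)] at hval
      exfalso
      omega
  -- the sum of all entries of v vanishes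
  have hsumv : ∑ j : Fin p, v j = 0 := by
    have e1 : ∑ t : Fin p, v (i0 + t) = ∑ j : Fin p, v j :=
      Fintype.sum_equiv (Equiv.addLeft i0) _ _ (fun t => by simp)
    rw [← e1]
    refine Finset.sum_involution (fun a _ => -a) ?_ ?_ (fun a ha => Finset.mem_univ _) ?_
    · intro a _
      rw [hfull a, ← sub_eq_add_neg]
      ring
    · intro a _ hfa h
      apply hfa
      have ha0 : a = 0 := by
        apply h2z
        nth_rewrite 1 [← h]
        exact neg_add_cancel a
      subst ha0
      simpa using h0
    · intro a _
      simp
  have heven : Even (p - 1) := Nat.Odd.sub_odd ⟨m, hm⟩ odd_one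
  -- divisibility
  have hchoose := stmt2_choose_mod p hp
  have hdvd : ∀ i : Fin p, (p : ℤ) ∣ ((A ^ (p - 1)).mulVec v) i := by
    intro i
    rw [← ZMod.intCast_zmod_eq_zero_iff_dvd, key i]
    push_cast
    have hterm : ∀ k ∈ Finset.range p,
        (-1 : ZMod p) ^ (p - 1 - k) * (((p - 1).choose k : ℕ) : ZMod p)
            * ((v (i + (k : Fin p)) : ℤ) : ZMod p)
          = ((v (i + (k : Fin p)) : ℤ) : ZMod p) := by
      intro k hk
      have hk' : k ≤ p - 1 := by
        have := Finset.mem_range.mp hk; omega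
      rw [hchoose k hk', ← pow_add, show p - 1 - k + k = p - 1 from by omega,
        heven.neg_one_pow, one_mul]
    rw [Finset.sum_congr rfl hterm, ← Int.cast_sum]
    have hs1 : ∑ k ∈ Finset.range p, v (i + (k : Fin p)) = ∑ t : Fin p, v (i + t) := by
      rw [← Fin.sum_univ_eq_sum_range (fun k => v (i + (k : Fin p))) p]
      exact Fintype.sum_congr _ _ (fun t => by rw [Fin.cast_val_eq_self])
    have hs2 : ∑ t : Fin p, v (i + t) = ∑ j : Fin p, v j :=
      Fintype.sum_equiv (Equiv.addLeft i) _ _ (fun t => by simp)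
    rw [hs1, hs2, hsumv, Int.cast_zero]
  -- the shift of the center
  set M : Fin p := (((p - 1) / 2 : ℕ) : Fin p) with hMdef
  have hM : M + M + 1 = 0 := by
    rw [hMdef, ← Nat.cast_add, ← Nat.cast_add_one,
      show (p - 1) / 2 + (p - 1) / 2 + 1 = p from by omega, Fin.natCast_self]
  -- sign symmetry
  have hsgn : ∀ k, k ≤ p - 1 → ((-1 : ℤ)) ^ (p - 1 - k) = (-1) ^ k := by
    intro k hk
    have hk2 : ((-1 : ℤ)) ^ k * (-1) ^ k = 1 := by
      rw [← pow_add]; exact Even.neg_one_pow ⟨k, rfl⟩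
    have hkey : ((-1 : ℤ)) ^ (p - 1 - k) * (-1) ^ k = 1 := by
      rw [← pow_add, show p - 1 - k + k = p - 1 from by omega]
      exact heven.neg_one_pow
    calc ((-1 : ℤ)) ^ (p - 1 - k)
        = ((-1) ^ (p - 1 - k) * (-1) ^ k) * (-1) ^ k := by rw [mul_assoc, hk2, mul_one]
      _ = (-1) ^ k := by rw [hkey, one_mul]
  have hcsymm : ∀ k, k ≤ p - 1 →
      ((-1 : ℤ)) ^ (p - 1 - (p - 1 - k)) * (((p - 1).choose (p - 1 - k) : ℕ) : ℤ)
        = (-1) ^ (p - 1 - k) * (((p - 1).choose k : ℕ) : ℤ) := by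
    intro k hk
    rw [show p - 1 - (p - 1 - k) = k from by omega, Nat.choose_symm hk, hsgn k hk]
  -- antisymmetry of the image vector around i0 - M
  have hw : ∀ t : Fin p, (A ^ (p - 1)).mulVec v ((i0 - M) + t)
      = -((A ^ (p - 1)).mulVec v ((i0 - M) - t)) := by
    intro t
    rw [key, key]
    rw [(Finset.sum_range_reflect (fun k =>
      ((-1 : ℤ) ^ (p - 1 - k) * (((p - 1).choose k : ℕ) : ℤ))
        * v ((i0 - M) + t + (k : Fin p))) p).symm]
    rw [← Finset.sum_neg_distrib]
    apply Finset.sum_congr rfl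
    intro k hk
    have hkp : k < p := Finset.mem_range.mp hk
    have hk1 : k ≤ p - 1 := by omega
    have harg : ((i0 - M) + t + ((p - 1 - k : ℕ) : Fin p))
        = i0 + (t - M - 1 - (k : Fin p)) := by
      rw [Nat.cast_sub hk1, Nat.cast_sub (by omega : 1 ≤ p), Fin.natCast_self, Nat.cast_one]
      ring
    rw [harg, hcsymm k hk1, hfull]
    rw [show i0 - (t - M - 1 - (k : Fin p)) = (i0 - M) - t + (k : Fin p) from by
      linear_combination hM]
    ring
  refine ⟨hdvd, ⟨i0 - M, ?_, fun j _ _ => hw j⟩⟩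
  have h00 := hw 0
  rw [add_zero, sub_zero] at h00
  linarith
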